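/- Let (g, [·,·]) be a Lie algebra, i ⊆ g an ideal, and δ: g → Λ²(g/i) a Lie algebra 1-cocycle whose dual δᵗ: i° × i° → g* defines a Lie bracket on the annihilator i° ⊆ g*. Equip the vector space m = (g/i) × i° with the quadratic Lie algebra structure of the double of the Lie bialgebra (g/i, i°). Then (m, i°) is a g-Manin pair: i° is a Lagrangian subalgebra of m and the map Φ: g → m, x ↦ (x + i, 0), is a Lie algebra morphism with isotropic image satisfying Φ(g) + i° = m and ⟨Φ(x), ξ⟩ = ⟨x, ξ⟩ for all x ∈ g, ξ ∈ i°. -/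
import Mathlib


variable {g : Type*} [LieRing g] [LieAlgebra ℝ g]

/-- The annihilator `i° ⊆ g*` of an ideal `i ⊆ g`. -/
noncomputable abbrev annIdeal (I : LieIdeal ℝ g) : Submodule ℝ (Module.Dual ℝ g) :=
  (I.toSubmodule).dualAnnihilator

/-- The coadjoint action of `g` on the annihilator `i°` of an ideal:
`(x ⋆ ξ)(y) = −ξ([x,y])`. -/
noncomputable def coadA (I : LieIdeal ℝ g) (x : g) (ξ : annIdeal I) : annIdeal I :=
  ⟨-((ξ : Module.Dual ℝ g) ∘ₗ (LieAlgebra.ad ℝ g x)), by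
    rw [Submodule.mem_dualAnnihilator]
    intro w hw
    have h := ((Submodule.mem_dualAnnihilator _).mp ξ.2) ⁅x, w⁆ (I.lie_mem hw)
    simp only [LinearMap.neg_apply, LinearMap.coe_comp, Function.comp_apply,
      LieAlgebra.ad_apply, h, neg_zero]⟩

/-- An element of `i° ≅ (g/i)*` evaluated on the quotient `g/i`. -/
noncomputable def evalQ (I : LieIdeal ℝ g) (ξ : annIdeal I) : (g ⧸ I) →ₗ[ℝ] ℝ :=
  Submodule.liftQ I.toSubmodule (ξ : Module.Dual ℝ g) (by
    intro w hw
    exact ((Submodule.mem_dualAnnihilator _).mp ξ.2) w hw)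

/-- The canonical pairing on the double `m = (g/i) × i°`:
`⟨(x,ξ),(y,η)⟩ = ξ(y) + η(x)`. -/
noncomputable def dblPairing (I : LieIdeal ℝ g) (z w : (g ⧸ I) × annIdeal I) : ℝ :=
  evalQ I z.2 w.1 + evalQ I w.2 z.1

/-- The embedding `Φ : g → m = (g/i) × i°`, `x ↦ (x + i, 0)`. -/
noncomputable def PhiMap (I : LieIdeal ℝ g) (x : g) : (g ⧸ I) × annIdeal I :=
  (Submodule.Quotient.mk x, 0)

section Aux
variable (I : LieIdeal ℝ g)

/-- mk into the Lie quotient. -/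
noncomputable abbrev qmk : g → g ⧸ I := LieSubmodule.Quotient.mk (N := I)

lemma qmk_surj : Function.Surjective (qmk I) := Submodule.Quotient.mk_surjective _

lemma qmk_bracket (x y : g) : ⁅qmk I x, qmk I y⁆ = qmk I ⁅x, y⁆ :=
  (LieSubmodule.Quotient.mk_bracket (I := I) x y).symm

lemma evalQ_mk (ξ : annIdeal I) (x : g) : evalQ I ξ (qmk I x) = (ξ : Module.Dual ℝ g) x := rfl

noncomputable def eAnn : Module.Dual ℝ (g ⧸ I) ≃ₗ[ℝ] annIdeal I :=
  Submodule.dualQuotEquivDualAnnihilator (I.toSubmodule)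

lemma evalQ_eq (ξ : annIdeal I) : evalQ I ξ = ((eAnn I).symm ξ : Module.Dual ℝ (g ⧸ I)) := by
  apply Submodule.linearMap_qext
  ext x
  exact (Submodule.dualQuotEquivDualAnnihilator_symm_apply_mk _ ξ x).symm

lemma evalQ_add (ξ η : annIdeal I) : evalQ I (ξ + η) = evalQ I ξ + evalQ I η := by
  rw [evalQ_eq, evalQ_eq, evalQ_eq, map_add]

lemma evalQ_smul (r : ℝ) (ξ : annIdeal I) : evalQ I (r • ξ) = r • evalQ I ξ := by
  rw [evalQ_eq, evalQ_eq, map_smul]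

lemma evalQ_sub (ξ η : annIdeal I) : evalQ I (ξ - η) = evalQ I ξ - evalQ I η := by
  have h : ξ - η = ξ + (-1 : ℝ) • η := by module
  rw [h, evalQ_add, evalQ_smul]
  ext z; simp; ring

lemma evalQ_zero : evalQ I (0 : annIdeal I) = 0 := by
  rw [evalQ_eq, map_zero]

variable [FiniteDimensional ℝ g]

lemma sep (z : g ⧸ I) (h : ∀ ξ : annIdeal I, evalQ I ξ z = 0) : z = 0 := by
  rw [← Module.forall_dual_apply_eq_zero_iff ℝ z]
  intro φ
  have := h (eAnn I φ)
  rw [evalQ_eq, LinearEquiv.symm_apply_apply] at this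
  exact this

lemma realize (F : annIdeal I →ₗ[ℝ] ℝ) : ∃ z : g ⧸ I, ∀ ξ, evalQ I ξ z = F ξ := by
  refine ⟨(Module.evalEquiv ℝ (g ⧸ I)).symm (F ∘ₗ (eAnn I).toLinearMap), fun ξ => ?_⟩
  rw [evalQ_eq, Module.apply_evalEquiv_symm_apply]
  simp only [LinearMap.coe_comp, Function.comp_apply, LinearEquiv.coe_coe,
    LinearEquiv.apply_symm_apply]

end Aux

section Coad
variable (I : LieIdeal ℝ g)

lemma ann_ext {a b : annIdeal I} (h : ∀ z, evalQ I a z = evalQ I b z) : a = b := by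
  apply (eAnn I).symm.injective
  have h2 : evalQ I a = evalQ I b := LinearMap.ext h
  rw [evalQ_eq, evalQ_eq] at h2
  exact h2

lemma coadA_apply (x y : g) (ξ : annIdeal I) :
    (coadA I x ξ : Module.Dual ℝ g) y = -(ξ : Module.Dual ℝ g) ⁅x, y⁆ := by
  simp [coadA]

/-- coadjoint action of `g ⧸ I` on `i°`. -/
noncomputable def cQ (xq : g ⧸ I) (η : annIdeal I) : annIdeal I :=
  eAnn I (-(evalQ I η ∘ₗ LieAlgebra.ad ℝ (g ⧸ I) xq))

lemma evalQ_cQ (xq z : g ⧸ I) (η : annIdeal I) :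
    evalQ I (cQ I xq η) z = - evalQ I η ⁅xq, z⁆ := by
  rw [cQ, evalQ_eq, LinearEquiv.symm_apply_apply]
  simp [LieAlgebra.ad_apply]

lemma cQ_mk (x : g) (ξ : annIdeal I) : cQ I (qmk I x) ξ = coadA I x ξ := by
  apply ann_ext
  intro z
  obtain ⟨y, rfl⟩ := qmk_surj I z
  rw [evalQ_cQ, qmk_bracket, evalQ_mk, evalQ_mk, coadA_apply]

end Coad

section More
variable (I : LieIdeal ℝ g)

lemma evalQ_add' (ξ η : annIdeal I) (z : g ⧸ I) :
    evalQ I (ξ + η) z = evalQ I ξ z + evalQ I η z := by rw [evalQ_add]; rfl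

lemma evalQ_smul' (r : ℝ) (ξ : annIdeal I) (z : g ⧸ I) :
    evalQ I (r • ξ) z = r * evalQ I ξ z := by rw [evalQ_smul]; rfl

lemma evalQ_sub' (ξ η : annIdeal I) (z : g ⧸ I) :
    evalQ I (ξ - η) z = evalQ I ξ z - evalQ I η z := by rw [evalQ_sub]; rfl

lemma evalQ_zero' (z : g ⧸ I) : evalQ I (0 : annIdeal I) z = 0 := by rw [evalQ_zero]; rfl

lemma evalQ_neg' (ξ : annIdeal I) (z : g ⧸ I) : evalQ I (-ξ) z = - evalQ I ξ z := by
  have : (-ξ : annIdeal I) = 0 - ξ := by abel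
  rw [this, evalQ_sub', evalQ_zero']; ring

lemma cQ_addx (x x' : g ⧸ I) (η : annIdeal I) :
    cQ I (x + x') η = cQ I x η + cQ I x' η := by
  apply ann_ext; intro z
  rw [evalQ_add', evalQ_cQ, evalQ_cQ, evalQ_cQ, add_lie, map_add]; ring

lemma cQ_addeta (x : g ⧸ I) (η η' : annIdeal I) :
    cQ I x (η + η') = cQ I x η + cQ I x η' := by
  apply ann_ext; intro z
  rw [evalQ_add', evalQ_cQ, evalQ_cQ, evalQ_cQ, evalQ_add']; ring

lemma cQ_smulx (r : ℝ) (x : g ⧸ I) (η : annIdeal I) :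
    cQ I (r • x) η = r • cQ I x η := by
  apply ann_ext; intro z
  rw [evalQ_smul', evalQ_cQ, evalQ_cQ, smul_lie, map_smul]
  simp

lemma cQ_smuleta (r : ℝ) (x : g ⧸ I) (η : annIdeal I) :
    cQ I x (r • η) = r • cQ I x η := by
  apply ann_ext; intro z
  rw [evalQ_smul', evalQ_cQ, evalQ_cQ, evalQ_smul']; ring

lemma cQ_zerox (η : annIdeal I) : cQ I (0 : g ⧸ I) η = 0 := by
  apply ann_ext; intro z
  rw [evalQ_cQ, evalQ_zero', zero_lie, map_zero]; ring

lemma cQ_zeroeta (x : g ⧸ I) : cQ I x (0 : annIdeal I) = 0 := by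
  apply ann_ext; intro z
  rw [evalQ_cQ, evalQ_zero', evalQ_zero']; ring

lemma cQ_negx (x : g ⧸ I) (η : annIdeal I) : cQ I (-x) η = - cQ I x η := by
  apply ann_ext; intro z
  rw [evalQ_neg', evalQ_cQ, evalQ_cQ, neg_lie, map_neg]

lemma evalQ_lie (σ : annIdeal I) (xq z : g ⧸ I) :
    evalQ I σ ⁅xq, z⁆ = - evalQ I (cQ I xq σ) z := by rw [evalQ_cQ]; ring

end More

set_option maxHeartbeats 2000000 in
/-- Let `g` be a (finite-dimensional, real) Lie algebra, `i ⊆ g` an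
ideal and `δ : g → Λ²(g/i)` a Lie algebra 1-cocycle whose dual `δᵗ` defines a Lie
bracket on `i°`.  Equip `m = (g/i) × i°` with the quadratic Lie algebra structure of
the double of the Lie bialgebra `(g/i, i°)` — i.e. the (unique) Lie bracket `Bm`
restricting to the given brackets on `g/i` and on `i°` for which the canonical
pairing is invariant.  Then `(m, i°)` is a `g`-Manin pair: `i°` is a Lagrangian
subalgebra of `m` and `Φ : g → m`, `x ↦ (x + i, 0)` is a Lie algebra morphism with
isotropic image satisfying `Φ(g) + i° = m` and `⟨Φ(x), ξ⟩ = ξ(x)`. -/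
theorem manin_pair_of_dirac_lie_group_cocycle
    [FiniteDimensional ℝ g] (I : LieIdeal ℝ g)
    -- `δ : g → Λ²(g/i)`, an element of `Λ²(g/i)` being seen as a skew bilinear form
    -- on `i° ≅ (g/i)*`:
    (δ : g →ₗ[ℝ] (annIdeal I →ₗ[ℝ] annIdeal I →ₗ[ℝ] ℝ))
    (hδskew : ∀ x ξ η, δ x ξ η = - δ x η ξ)
    -- `δ` is a 1-cocycle for the natural `g`-module structure on `Λ²(g/i)`:
    (hcocycle : ∀ x y ξ η, δ ⁅x, y⁆ ξ η
      = (- δ y (coadA I x ξ) η - δ y ξ (coadA I x η))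
        - (- δ x (coadA I y ξ) η - δ x ξ (coadA I y η)))
    -- the dual `δᵗ : i° × i° → g*` takes values in `i°` and defines a Lie bracket:
    (db : annIdeal I → annIdeal I → annIdeal I)
    (hdb : ∀ ξ η x, (db ξ η : Module.Dual ℝ g) x = δ x ξ η)
    (hdb_jacobi : ∀ ξ η ζ, db ξ (db η ζ) = db (db ξ η) ζ + db η (db ξ ζ)) :
    ∃ Bm : ((g ⧸ I) × annIdeal I) → ((g ⧸ I) × annIdeal I) → ((g ⧸ I) × annIdeal I),
      -- `Bm` is ℝ-bilinear:
      (∀ z₁ z₂ w, Bm (z₁ + z₂) w = Bm z₁ w + Bm z₂ w) ∧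
      (∀ z w₁ w₂, Bm z (w₁ + w₂) = Bm z w₁ + Bm z w₂) ∧
      (∀ (r : ℝ) z w, Bm (r • z) w = r • Bm z w) ∧
      (∀ (r : ℝ) z w, Bm z (r • w) = r • Bm z w) ∧
      -- `Bm` is a Lie bracket:
      (∀ z w, Bm z w = - Bm w z) ∧
      (∀ z w u, Bm z (Bm w u) = Bm (Bm z w) u + Bm w (Bm z u)) ∧
      -- the pairing is invariant, so `(m, Bm, ⟨·,·⟩)` is a quadratic Lie algebra:
      (∀ z w u, dblPairing I (Bm z w) u + dblPairing I w (Bm z u) = 0) ∧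
      (∀ z, (∀ w, dblPairing I z w = 0) → z = 0) ∧
      -- `Bm` restricts to the Lie bracket on `g/i` and to `δᵗ` on `i°`:
      (∀ xq yq : g ⧸ I, Bm (xq, 0) (yq, 0) = (⁅xq, yq⁆, 0)) ∧
      (∀ ξ η : annIdeal I, Bm (0, ξ) (0, η) = (0, db ξ η)) ∧
      -- `i°` is Lagrangian in `m` (it is isotropic by the pairing formula, and maximal):
      (∀ ξ η : annIdeal I,
        dblPairing I ((0 : g ⧸ I), ξ) ((0 : g ⧸ I), η) = 0) ∧
      (∀ z : (g ⧸ I) × annIdeal I,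
        (∀ ξ : annIdeal I, dblPairing I z ((0 : g ⧸ I), ξ) = 0) → z.1 = 0) ∧
      -- `Φ` is a Lie algebra morphism with isotropic image:
      (∀ x y : g, Bm (PhiMap I x) (PhiMap I y) = PhiMap I ⁅x, y⁆) ∧
      (∀ x y : g, dblPairing I (PhiMap I x) (PhiMap I y) = 0) ∧
      -- `Φ(g) + i° = m`:
      (∀ z : (g ⧸ I) × annIdeal I, ∃ (x : g) (ξ : annIdeal I),
        z = PhiMap I x + ((0 : g ⧸ I), ξ)) ∧
      -- compatibility of the pairings: `⟨Φ(x), ξ⟩ = ξ(x)`: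
      (∀ (x : g) (ξ : annIdeal I),
        dblPairing I (PhiMap I x) ((0 : g ⧸ I), ξ) = (ξ : Module.Dual ℝ g) x) := by
  classical
  -- basic properties of `db`
  have db_skew : ∀ ξ η, db ξ η = - db η ξ := by
    intro ξ η
    apply Subtype.ext; apply LinearMap.ext; intro x
    have h3 := hδskew x ξ η
    have hco : ((-db η ξ : annIdeal I) : Module.Dual ℝ g) x
        = - (db η ξ : Module.Dual ℝ g) x := rfl
    rw [hdb, hco, hdb]; linarith
  have db_addl : ∀ ξ ξ' η, db (ξ + ξ') η = db ξ η + db ξ' η := by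
    intro ξ ξ' η
    apply Subtype.ext; apply LinearMap.ext; intro x
    have hco : ((db ξ η + db ξ' η : annIdeal I) : Module.Dual ℝ g) x
        = (db ξ η : Module.Dual ℝ g) x + (db ξ' η : Module.Dual ℝ g) x := rfl
    rw [hdb, hco, hdb, hdb, map_add, LinearMap.add_apply]
  have db_addr : ∀ ξ η η', db ξ (η + η') = db ξ η + db ξ η' := by
    intro ξ η η'
    apply Subtype.ext; apply LinearMap.ext; intro x
    have hco : ((db ξ η + db ξ η' : annIdeal I) : Module.Dual ℝ g) x
        = (db ξ η : Module.Dual ℝ g) x + (db ξ η' : Module.Dual ℝ g) x := rfl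
    rw [hdb, hco, hdb, hdb, map_add]
  have db_smull : ∀ (r : ℝ) ξ η, db (r • ξ) η = r • db ξ η := by
    intro r ξ η
    apply Subtype.ext; apply LinearMap.ext; intro x
    have hco : ((r • db ξ η : annIdeal I) : Module.Dual ℝ g) x
        = r * (db ξ η : Module.Dual ℝ g) x := rfl
    rw [hdb, hco, hdb, map_smul, LinearMap.smul_apply, smul_eq_mul]
  have db_smulr : ∀ (r : ℝ) ξ η, db ξ (r • η) = r • db ξ η := by
    intro r ξ η
    apply Subtype.ext; apply LinearMap.ext; intro x
    have hco : ((r • db ξ η : annIdeal I) : Module.Dual ℝ g) x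
        = r * (db ξ η : Module.Dual ℝ g) x := rfl
    rw [hdb, hco, hdb, map_smul, smul_eq_mul]
  have db_zerol : ∀ η, db 0 η = 0 := by
    intro η
    apply Subtype.ext; apply LinearMap.ext; intro x
    have hco : ((0 : annIdeal I) : Module.Dual ℝ g) x = 0 := rfl
    rw [hdb, hco, map_zero, LinearMap.zero_apply]
  have db_zeror : ∀ ξ, db ξ 0 = 0 := by
    intro ξ
    apply Subtype.ext; apply LinearMap.ext; intro x
    have hco : ((0 : annIdeal I) : Module.Dual ℝ g) x = 0 := rfl
    rw [hdb, hco, map_zero]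
  have db_negl : ∀ ξ η, db (-ξ) η = - db ξ η := by
    intro ξ η
    have h1 : (-ξ : annIdeal I) = (-1 : ℝ) • ξ := by module
    rw [h1, db_smull]; module
  have db_negr : ∀ ξ η, db ξ (-η) = - db ξ η := by
    intro ξ η
    have h1 : (-η : annIdeal I) = (-1 : ℝ) • η := by module
    rw [h1, db_smulr]; module
  -- quotient-level evaluation of `db`
  have evdb : ∀ (ξ η : annIdeal I) (x : g),
      evalQ I (db ξ η) (qmk I x) = δ x ξ η := by
    intro ξ η x; rw [evalQ_mk, hdb]
  have hdbsk : ∀ (ξ η : annIdeal I) (z : g ⧸ I),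
      evalQ I (db ξ η) z = - evalQ I (db η ξ) z := by
    intro ξ η z; rw [db_skew ξ η, evalQ_neg']
  -- quotient-level cocycle identity
  have hcoQ : ∀ (xq yq : g ⧸ I) (ξ η : annIdeal I),
      evalQ I (db ξ η) ⁅xq, yq⁆
        = (- evalQ I (db (cQ I xq ξ) η) yq - evalQ I (db ξ (cQ I xq η)) yq)
          - (- evalQ I (db (cQ I yq ξ) η) xq - evalQ I (db ξ (cQ I yq η)) xq) := by
    intro xq yq ξ η
    obtain ⟨x, rfl⟩ := qmk_surj I xq
    obtain ⟨y, rfl⟩ := qmk_surj I yq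
    rw [qmk_bracket, evdb, evdb, evdb, evdb, evdb, cQ_mk, cQ_mk, cQ_mk, cQ_mk]
    exact hcocycle x y ξ η
  -- quotient-level Jacobi for `db`
  have dbjac : ∀ (ξ η τ : annIdeal I) (z : g ⧸ I),
      evalQ I (db ξ (db η τ)) z
        = evalQ I (db (db ξ η) τ) z + evalQ I (db η (db ξ τ)) z := by
    intro ξ η τ z; rw [hdb_jacobi ξ η τ, evalQ_add']
  -- the map `D : i° × (g/i) → g/i` dual to the bracket of `i°`
  have hreal : ∀ (ξ : annIdeal I) (yq : g ⧸ I), ∃ zq : g ⧸ I,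
      ∀ τ, evalQ I τ zq = - evalQ I (db ξ τ) yq := by
    intro ξ yq
    obtain ⟨y, rfl⟩ := qmk_surj I yq
    obtain ⟨zq, hz⟩ := realize I (-(δ y ξ))
    refine ⟨zq, fun τ => ?_⟩
    rw [hz, evdb]
    simp
  choose D hD using hreal
  have D_ext : ∀ zq wq : g ⧸ I, (∀ τ, evalQ I τ zq = evalQ I τ wq) → zq = wq := by
    intro zq wq h
    have h0 : zq - wq = 0 := sep I _ (fun τ => by rw [map_sub, h, sub_self])
    exact sub_eq_zero.mp h0
  have D_addl : ∀ ξ ξ' y, D (ξ + ξ') y = D ξ y + D ξ' y := by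
    intro ξ ξ' y; apply D_ext; intro τ
    rw [map_add, hD, hD, hD, db_addl, evalQ_add']; ring
  have D_addr : ∀ ξ y y', D ξ (y + y') = D ξ y + D ξ y' := by
    intro ξ y y'; apply D_ext; intro τ
    rw [map_add, hD, hD, hD, map_add]; ring
  have D_smull : ∀ (r : ℝ) ξ y, D (r • ξ) y = r • D ξ y := by
    intro r ξ y; apply D_ext; intro τ
    rw [map_smul, hD, hD, db_smull, evalQ_smul', smul_eq_mul]; ring
  have D_smulr : ∀ (r : ℝ) ξ y, D ξ (r • y) = r • D ξ y := by
    intro r ξ y; apply D_ext; intro τ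
    rw [map_smul, hD, hD, map_smul, smul_eq_mul, smul_eq_mul]; ring
  have D_zerol : ∀ y, D 0 y = 0 := by
    intro y; apply D_ext; intro τ
    rw [hD, db_zerol, evalQ_zero', map_zero]; ring
  have D_zeror : ∀ ξ, D ξ 0 = 0 := by
    intro ξ; apply D_ext; intro τ
    rw [hD, map_zero, map_zero]; ring
  -- lie skew at evaluation level
  have lsk : ∀ (σ : annIdeal I) (a b : g ⧸ I),
      evalQ I σ ⁅a, b⁆ = - evalQ I σ ⁅b, a⁆ := by
    intro σ a b
    have h1 : (⁅a, b⁆ : g ⧸ I) = -⁅b, a⁆ := (lie_skew a b).symm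
    rw [h1, map_neg]
  -- the double bracket
  let Bm : ((g ⧸ I) × annIdeal I) → ((g ⧸ I) × annIdeal I) → ((g ⧸ I) × annIdeal I) :=
    fun z w => (⁅z.1, w.1⁆ + D z.2 w.1 - D w.2 z.1,
                db z.2 w.2 + cQ I z.1 w.2 - cQ I w.1 z.2)
  have hBm : ∀ z w, Bm z w = (⁅z.1, w.1⁆ + D z.2 w.1 - D w.2 z.1,
                db z.2 w.2 + cQ I z.1 w.2 - cQ I w.1 z.2) := fun _ _ => rfl
  -- bilinearity
  have hadd1 : ∀ z₁ z₂ w, Bm (z₁ + z₂) w = Bm z₁ w + Bm z₂ w := by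
    intro z₁ z₂ w
    rw [hBm, hBm, hBm]
    refine Prod.ext ?_ ?_
    · simp only [Prod.fst_add, Prod.snd_add, Prod.mk_add_mk]
      rw [add_lie, D_addl, D_addr]; abel
    · simp only [Prod.fst_add, Prod.snd_add, Prod.mk_add_mk]
      rw [db_addl, cQ_addx, cQ_addeta]; abel
  have hadd2 : ∀ z w₁ w₂, Bm z (w₁ + w₂) = Bm z w₁ + Bm z w₂ := by
    intro z w₁ w₂
    rw [hBm, hBm, hBm]
    refine Prod.ext ?_ ?_
    · simp only [Prod.fst_add, Prod.snd_add, Prod.mk_add_mk]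
      rw [lie_add, D_addr, D_addl]; abel
    · simp only [Prod.fst_add, Prod.snd_add, Prod.mk_add_mk]
      rw [db_addr, cQ_addeta, cQ_addx]; abel
  have hsmul1 : ∀ (r : ℝ) z w, Bm (r • z) w = r • Bm z w := by
    intro r z w
    rw [hBm, hBm]
    refine Prod.ext ?_ ?_
    · simp only [Prod.smul_fst, Prod.smul_snd, Prod.smul_mk]
      rw [smul_lie, D_smull, D_smulr]; module
    · simp only [Prod.smul_fst, Prod.smul_snd, Prod.smul_mk]
      rw [db_smull, cQ_smulx, cQ_smuleta]; module
  have hsmul2 : ∀ (r : ℝ) z w, Bm z (r • w) = r • Bm z w := by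
    intro r z w
    rw [hBm, hBm]
    refine Prod.ext ?_ ?_
    · simp only [Prod.smul_fst, Prod.smul_snd, Prod.smul_mk]
      rw [lie_smul, D_smulr, D_smull]; module
    · simp only [Prod.smul_fst, Prod.smul_snd, Prod.smul_mk]
      rw [db_smulr, cQ_smuleta, cQ_smulx]; module
  have hskew : ∀ z w, Bm z w = - Bm w z := by
    intro z w
    rw [hBm, hBm]
    have h1 : (⁅z.1, w.1⁆ : g ⧸ I) = -⁅w.1, z.1⁆ := (lie_skew _ _).symm
    refine Prod.ext ?_ ?_
    · show ⁅z.1, w.1⁆ + D z.2 w.1 - D w.2 z.1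
        = -(⁅w.1, z.1⁆ + D w.2 z.1 - D z.2 w.1)
      rw [h1]; abel
    · show db z.2 w.2 + cQ I z.1 w.2 - cQ I w.1 z.2
        = -(db w.2 z.2 + cQ I w.1 z.2 - cQ I z.1 w.2)
      rw [db_skew z.2 w.2]; abel
  have hBneg1 : ∀ z w, Bm (-z) w = - Bm z w := by
    intro z w
    have h1 : (-z : (g ⧸ I) × annIdeal I) = (-1 : ℝ) • z := by module
    rw [h1, hsmul1]; module
  have hBneg2 : ∀ z w, Bm z (-w) = - Bm z w := by
    intro z w
    have h1 : (-w : (g ⧸ I) × annIdeal I) = (-1 : ℝ) • w := by module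
    rw [h1, hsmul2]; module
  -- restriction lemmas
  have bG : ∀ xq yq : g ⧸ I, Bm (xq, 0) (yq, 0) = (⁅xq, yq⁆, 0) := by
    intro xq yq
    rw [hBm]
    refine Prod.ext ?_ ?_
    · show ⁅xq, yq⁆ + D 0 yq - D 0 xq = ⁅xq, yq⁆
      rw [D_zerol, D_zerol]; abel
    · show db 0 0 + cQ I xq 0 - cQ I yq 0 = 0
      rw [db_zerol, cQ_zeroeta, cQ_zeroeta]; abel
  have bA : ∀ ξ η : annIdeal I, Bm (0, ξ) (0, η) = (0, db ξ η) := by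
    intro ξ η
    rw [hBm]
    refine Prod.ext ?_ ?_
    · show ⁅(0 : g ⧸ I), (0 : g ⧸ I)⁆ + D ξ 0 - D η 0 = 0
      rw [D_zeror, D_zeror, zero_lie]; abel
    · show db ξ η + cQ I 0 η - cQ I 0 ξ = db ξ η
      rw [cQ_zerox, cQ_zerox]; abel
  have bGA : ∀ (xq : g ⧸ I) (τ : annIdeal I),
      Bm (xq, 0) (0, τ) = (- D τ xq, cQ I xq τ) := by
    intro xq τ
    rw [hBm]
    refine Prod.ext ?_ ?_
    · show ⁅xq, (0 : g ⧸ I)⁆ + D 0 0 - D τ xq = - D τ xq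
      rw [D_zerol, lie_zero]; abel
    · show db 0 τ + cQ I xq τ - cQ I 0 0 = cQ I xq τ
      rw [db_zerol, cQ_zerox]; abel
  have bAG : ∀ (ξ : annIdeal I) (yq : g ⧸ I),
      Bm (0, ξ) (yq, 0) = (D ξ yq, - cQ I yq ξ) := by
    intro ξ yq
    rw [hBm]
    refine Prod.ext ?_ ?_
    · show ⁅(0 : g ⧸ I), yq⁆ + D ξ yq - D 0 0 = D ξ yq
      rw [D_zerol, zero_lie]; abel
    · show db ξ 0 + cQ I 0 0 - cQ I yq ξ = - cQ I yq ξ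
      rw [db_zeror, cQ_zerox]; abel
  -- mixed bracket with general second components
  have bGmix : ∀ (xq : g ⧸ I) (Y : g ⧸ I) (H : annIdeal I),
      Bm (xq, 0) (Y, H) = (⁅xq, Y⁆ - D H xq, db 0 H + cQ I xq H) := by
    intro xq Y H
    rw [hBm]
    refine Prod.ext ?_ ?_
    · show ⁅xq, Y⁆ + D 0 Y - D H xq = ⁅xq, Y⁆ - D H xq
      rw [D_zerol]; abel
    · show db 0 H + cQ I xq H - cQ I Y 0 = db 0 H + cQ I xq H
      rw [cQ_zeroeta]; abel
  -- Jacobi: the Jacobiator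
  let Jac : ((g ⧸ I) × annIdeal I) → ((g ⧸ I) × annIdeal I) →
      ((g ⧸ I) × annIdeal I) → ((g ⧸ I) × annIdeal I) :=
    fun z w u => Bm z (Bm w u) - Bm (Bm z w) u - Bm w (Bm z u)
  have hJac : ∀ z w u, Jac z w u
      = Bm z (Bm w u) - Bm (Bm z w) u - Bm w (Bm z u) := fun _ _ _ => rfl
  have hswap12 : ∀ z w u, Jac w z u = - Jac z w u := by
    intro z w u
    rw [hJac, hJac, hskew w z, hBneg1, hskew w (Bm z u), hskew z (Bm w u)]
    abel
  have hswap23 : ∀ z w u, Jac z u w = - Jac z w u := by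
    intro z w u
    rw [hJac, hJac, hskew u w, hBneg2, hskew (Bm z u) w, hskew u (Bm z w),
      hskew (Bm z w) u, hskew w (Bm z u)]
    abel
  have hJadd1 : ∀ z₁ z₂ w u, Jac (z₁ + z₂) w u = Jac z₁ w u + Jac z₂ w u := by
    intro z₁ z₂ w u
    simp only [hJac, hadd1, hadd2]
    abel
  have hJadd2 : ∀ z w₁ w₂ u, Jac z (w₁ + w₂) u = Jac z w₁ u + Jac z w₂ u := by
    intro z w₁ w₂ u
    simp only [hJac, hadd1, hadd2]
    abel
  have hJadd3 : ∀ z w u₁ u₂, Jac z w (u₁ + u₂) = Jac z w u₁ + Jac z w u₂ := by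
    intro z w u₁ u₂
    simp only [hJac, hadd1, hadd2]
    abel
  -- case GGG
  have cGGG : ∀ x y t : g ⧸ I, Jac (x, 0) (y, 0) (t, 0) = 0 := by
    intro x y t
    rw [hJac, bG y t, bG x y, bG x t, bG, bG, bG]
    have h1 : (⁅x, ⁅y, t⁆⁆ : g ⧸ I) = ⁅⁅x, y⁆, t⁆ + ⁅y, ⁅x, t⁆⁆ := leibniz_lie x y t
    refine Prod.ext ?_ ?_
    · show ⁅x, ⁅y, t⁆⁆ - ⁅⁅x, y⁆, t⁆ - ⁅y, ⁅x, t⁆⁆ = 0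
      rw [h1]; abel
    · show (0 : annIdeal I) - 0 - 0 = 0
      abel
  -- case AAA
  have cAAA : ∀ ξ η τ : annIdeal I, Jac (0, ξ) (0, η) (0, τ) = 0 := by
    intro ξ η τ
    rw [hJac, bA η τ, bA ξ η, bA ξ τ, bA, bA, bA]
    refine Prod.ext ?_ ?_
    · show (0 : g ⧸ I) - 0 - 0 = 0
      abel
    · show db ξ (db η τ) - db (db ξ η) τ - db η (db ξ τ) = 0
      rw [hdb_jacobi ξ η τ]; abel
  -- case GGA
  have cGGA : ∀ (x y : g ⧸ I) (τ : annIdeal I), Jac (x, 0) (y, 0) (0, τ) = 0 := by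
    intro x y τ
    rw [hJac, bGA y τ, bG x y, bGA x τ, bGA ⁅x, y⁆ τ, bGmix, bGmix]
    rw [db_zerol, db_zerol]
    refine Prod.ext ?_ ?_
    · show ⁅x, - D τ y⁆ - D (cQ I y τ) x
        - (- D τ ⁅x, y⁆) - (⁅y, - D τ x⁆ - D (cQ I x τ) y) = 0
      apply D_ext _ 0
      intro σ
      rw [map_zero]
      simp only [map_sub, map_add, map_neg, lie_neg]
      rw [hD, hD, hD]
      rw [evalQ_lie, evalQ_lie, evalQ_lie]
      rw [hD, hD]
      have hco := hcoQ x y τ σ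
      rw [evalQ_lie] at hco
      linarith
    · show (0 : annIdeal I) + cQ I x (cQ I y τ)
        - cQ I ⁅x, y⁆ τ - (0 + cQ I y (cQ I x τ)) = 0
      have key : cQ I x (cQ I y τ) = cQ I ⁅x, y⁆ τ + cQ I y (cQ I x τ) := by
        apply ann_ext; intro z
        rw [evalQ_add', evalQ_cQ, evalQ_cQ, evalQ_cQ, evalQ_cQ, evalQ_cQ]
        have h1 : (⁅x, ⁅y, z⁆⁆ : g ⧸ I) = ⁅⁅x, y⁆, z⁆ + ⁅y, ⁅x, z⁆⁆ := leibniz_lie x y z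
        have h2 := congrArg (evalQ I τ) h1
        rw [map_add] at h2
        linarith
      rw [key]; abel
  -- case GAA
  have cGAA : ∀ (x : g ⧸ I) (η τ : annIdeal I), Jac (x, 0) (0, η) (0, τ) = 0 := by
    intro x η τ
    rw [hJac, bA η τ, bGA x η, bGA x τ]
    rw [bGA x (db η τ)]
    have e1 : Bm (- D η x, cQ I x η) (0, τ)
        = (- D τ (- D η x), db (cQ I x η) τ + cQ I (- D η x) τ) := by
      rw [hBm]
      refine Prod.ext ?_ ?_
      · show ⁅- D η x, (0 : g ⧸ I)⁆ + D (cQ I x η) 0 - D τ (- D η x) = - D τ (- D η x)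
        rw [D_zeror, lie_zero]; abel
      · show db (cQ I x η) τ + cQ I (- D η x) τ - cQ I 0 (cQ I x η)
          = db (cQ I x η) τ + cQ I (- D η x) τ
        rw [cQ_zerox]; abel
    have e2 : Bm (0, η) (- D τ x, cQ I x τ)
        = (D η (- D τ x), db η (cQ I x τ) - cQ I (- D τ x) η) := by
      rw [hBm]
      refine Prod.ext ?_ ?_
      · show ⁅(0 : g ⧸ I), - D τ x⁆ + D η (- D τ x) - D (cQ I x τ) 0 = D η (- D τ x)
        rw [D_zeror, zero_lie]; abel
      · show db η (cQ I x τ) + cQ I 0 (cQ I x τ) - cQ I (- D τ x) η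
          = db η (cQ I x τ) - cQ I (- D τ x) η
        rw [cQ_zerox]; abel
    rw [e1, e2]
    have hDneg : ∀ (ξ : annIdeal I) (y : g ⧸ I), D ξ (-y) = - D ξ y := by
      intro ξ y
      have h1 : (-y : g ⧸ I) = (-1 : ℝ) • y := by module
      rw [h1, D_smulr]; module
    have hcqneg : ∀ (y : g ⧸ I) (ξ : annIdeal I), cQ I (-y) ξ = - cQ I y ξ := cQ_negx I
    rw [hDneg τ (D η x), hDneg η (D τ x), hcqneg (D η x) τ, hcqneg (D τ x) η]
    refine Prod.ext ?_ ?_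
    · show - D (db η τ) x - (- - D τ (D η x)) - - D η (D τ x) = 0
      apply D_ext _ 0
      intro σ
      rw [map_zero]
      simp only [map_sub, map_neg, neg_neg]
      rw [hD, hD, hD]
      -- atoms : -(-evalQ (db (db η τ) σ) x) etc after hD on nested D's:
      rw [hD, hD]
      -- now relate db (db η τ) σ with db η (db τ σ) and db τ (db η σ)
      have key : ∀ z, evalQ I (db (db η τ) σ) z
          = evalQ I (db η (db τ σ)) z - evalQ I (db τ (db η σ)) z := by
        intro z
        have h1 := hdbsk (db η τ) σ z
        have h2 := dbjac σ η τ z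
        have h3 := hdbsk (db σ η) τ z
        have h4 := hdbsk η σ z
        have h5 := hdbsk τ σ z
        -- db σ (db η τ) = db (db σ η) τ + db η (db σ τ)
        have e4 : evalQ I (db (db σ η) τ) z = - evalQ I (db (db η σ) τ) z := by
          rw [db_skew σ η, db_negl, evalQ_neg']
        have e5 : evalQ I (db η (db σ τ)) z = - evalQ I (db η (db τ σ)) z := by
          rw [db_skew σ τ, db_negr, evalQ_neg']
        have e6 : evalQ I (db (db η σ) τ) z = - evalQ I (db τ (db η σ)) z :=
          hdbsk (db η σ) τ z
        linarith
      have hk := key x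
      linarith
    · show cQ I x (db η τ) - (db (cQ I x η) τ + - cQ I (D η x) τ)
        - (db η (cQ I x τ) - - cQ I (D τ x) η) = 0
      have key : cQ I x (db η τ)
          = db (cQ I x η) τ - cQ I (D η x) τ + db η (cQ I x τ) + cQ I (D τ x) η := by
        apply ann_ext; intro z
        rw [evalQ_add', evalQ_add', evalQ_sub']
        rw [evalQ_cQ, evalQ_cQ, evalQ_cQ]
        rw [hcoQ x z η τ]
        -- remaining : -evalQ η ⁅D τ x, z⁆ and -evalQ τ ⁅D η x, z⁆ terms
        have h1 : evalQ I τ ⁅D η x, z⁆ = - evalQ I τ ⁅z, D η x⁆ := lsk τ _ _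
        have h2 : evalQ I η ⁅D τ x, z⁆ = - evalQ I η ⁅z, D τ x⁆ := lsk η _ _
        have h3 : evalQ I τ ⁅z, D η x⁆ = - evalQ I (cQ I z τ) (D η x) := evalQ_lie _ _ _ _
        have h4 : evalQ I η ⁅z, D τ x⁆ = - evalQ I (cQ I z η) (D τ x) := evalQ_lie _ _ _ _
        have h5 : evalQ I (cQ I z τ) (D η x) = - evalQ I (db η (cQ I z τ)) x := hD _ _ _
        have h6 : evalQ I (cQ I z η) (D τ x) = - evalQ I (db τ (cQ I z η)) x := hD _ _ _
        have h7 : evalQ I (db τ (cQ I z η)) x = - evalQ I (db (cQ I z η) τ) x :=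
          hdbsk _ _ _
        linarith
      rw [key]; abel
  -- assemble Jacobi from the four cases
  have hdecomp : ∀ z : (g ⧸ I) × annIdeal I, z = (z.1, (0 : annIdeal I)) + ((0 : g ⧸ I), z.2) := by
    intro z
    refine Prod.ext ?_ ?_ <;> simp
  have hJGG : ∀ (x y : g ⧸ I) (u : (g ⧸ I) × annIdeal I),
      Jac (x, 0) (y, 0) u = 0 := by
    intro x y u
    rw [hdecomp u, hJadd3, cGGG, cGGA]
    abel
  have hJGA : ∀ (x : g ⧸ I) (η : annIdeal I) (u : (g ⧸ I) × annIdeal I),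
      Jac (x, 0) (0, η) u = 0 := by
    intro x η u
    rw [hdecomp u, hJadd3, cGAA]
    have h1 : Jac ((x : g ⧸ I), (0 : annIdeal I)) (0, η) (u.1, 0) = 0 := by
      rw [hswap23, cGGA]; abel
    rw [h1]; abel
  have hJG : ∀ (x : g ⧸ I) (w u : (g ⧸ I) × annIdeal I),
      Jac (x, 0) w u = 0 := by
    intro x w u
    rw [hdecomp w, hJadd2, hJGG, hJGA]
    abel
  have hJA : ∀ (ξ : annIdeal I) (w u : (g ⧸ I) × annIdeal I),
      Jac (0, ξ) w u = 0 := by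
    intro ξ w u
    rw [hdecomp w, hJadd2]
    have h1 : Jac ((0 : g ⧸ I), ξ) (w.1, 0) u = 0 := by
      rw [hswap12, hJGA]; abel
    have h2 : Jac ((0 : g ⧸ I), ξ) ((0 : g ⧸ I), w.2) u = 0 := by
      rw [hdecomp u, hJadd3]
      have h3 : Jac ((0 : g ⧸ I), ξ) ((0 : g ⧸ I), w.2) (u.1, 0) = 0 := by
        rw [hswap23]
        have h4 : Jac ((0 : g ⧸ I), ξ) (u.1, 0) ((0 : g ⧸ I), w.2) = 0 := by
          rw [hswap12, hJGA]; abel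
        rw [h4]; abel
      rw [h3, cAAA]; abel
    rw [h1, h2]; abel
  have hJ : ∀ z w u, Jac z w u = 0 := by
    intro z w u
    rw [hdecomp z, hJadd1, hJG, hJA]
    abel
  have hjacobi : ∀ z w u, Bm z (Bm w u) = Bm (Bm z w) u + Bm w (Bm z u) := by
    intro z w u
    have h0 := hJ z w u
    rw [hJac] at h0
    have h1 : Bm z (Bm w u) - (Bm (Bm z w) u + Bm w (Bm z u)) = 0 := by
      rw [← h0]; abel
    exact sub_eq_zero.mp h1
  -- invariance of the pairing
  have hinv : ∀ z w u, dblPairing I (Bm z w) u + dblPairing I w (Bm z u) = 0 := by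
    intro z w u
    rw [hBm, hBm]
    show evalQ I (db z.2 w.2 + cQ I z.1 w.2 - cQ I w.1 z.2) u.1
        + evalQ I u.2 (⁅z.1, w.1⁆ + D z.2 w.1 - D w.2 z.1)
        + (evalQ I w.2 (⁅z.1, u.1⁆ + D z.2 u.1 - D u.2 z.1)
          + evalQ I (db z.2 u.2 + cQ I z.1 u.2 - cQ I u.1 z.2) w.1) = 0
    rw [evalQ_sub', evalQ_add', evalQ_sub', evalQ_add']
    rw [map_sub, map_add, map_sub, map_add]
    rw [hD z.2 w.1 u.2, hD w.2 z.1 u.2, hD z.2 u.1 w.2, hD u.2 z.1 w.2]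
    rw [evalQ_cQ, evalQ_cQ, evalQ_cQ, evalQ_cQ]
    have h1 := hdbsk w.2 u.2 z.1
    have h2 := lsk z.2 w.1 u.1
    have h3 := lsk u.2 z.1 w.1
    have h4 := lsk w.2 z.1 u.1
    linarith
  -- nondegeneracy
  have hnondeg : ∀ z : (g ⧸ I) × annIdeal I,
      (∀ w, dblPairing I z w = 0) → z = 0 := by
    intro z h
    have h1 : z.1 = 0 := by
      apply sep
      intro ξ
      have hw := h ((0 : g ⧸ I), ξ)
      show evalQ I ξ z.1 = 0
      have : evalQ I z.2 (0 : g ⧸ I) + evalQ I ξ z.1 = 0 := hw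
      rw [map_zero] at this
      linarith
    have h2 : z.2 = 0 := by
      apply ann_ext
      intro zq
      rw [evalQ_zero']
      have hw := h (zq, (0 : annIdeal I))
      have : evalQ I z.2 zq + evalQ I (0 : annIdeal I) z.1 = 0 := hw
      rw [evalQ_zero'] at this
      linarith
    refine Prod.ext ?_ ?_
    · rw [h1]; rfl
    · rw [h2]; rfl
  -- Lagrangian : isotropy
  have hiso : ∀ ξ η : annIdeal I,
      dblPairing I ((0 : g ⧸ I), ξ) ((0 : g ⧸ I), η) = 0 := by
    intro ξ η
    show evalQ I ξ (0 : g ⧸ I) + evalQ I η (0 : g ⧸ I) = 0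
    rw [map_zero, map_zero]; ring
  -- Lagrangian : maximality
  have hmax : ∀ z : (g ⧸ I) × annIdeal I,
      (∀ ξ : annIdeal I, dblPairing I z ((0 : g ⧸ I), ξ) = 0) → z.1 = 0 := by
    intro z h
    apply sep
    intro ξ
    have hw := h ξ
    have : evalQ I z.2 (0 : g ⧸ I) + evalQ I ξ z.1 = 0 := hw
    rw [map_zero] at this
    linarith
  -- Phi is a morphism
  have hphimk : ∀ x : g, PhiMap I x = ((qmk I x : g ⧸ I), (0 : annIdeal I)) := fun _ => rfl
  have hphi : ∀ x y : g, Bm (PhiMap I x) (PhiMap I y) = PhiMap I ⁅x, y⁆ := by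
    intro x y
    rw [hphimk, hphimk, hphimk, bG, qmk_bracket]
  have hphiiso : ∀ x y : g, dblPairing I (PhiMap I x) (PhiMap I y) = 0 := by
    intro x y
    show evalQ I (0 : annIdeal I) _ + evalQ I (0 : annIdeal I) _ = 0
    rw [evalQ_zero', evalQ_zero']; ring
  have hdecph : ∀ z : (g ⧸ I) × annIdeal I, ∃ (x : g) (ξ : annIdeal I),
      z = PhiMap I x + ((0 : g ⧸ I), ξ) := by
    intro z
    obtain ⟨x, hx⟩ := qmk_surj I z.1
    refine ⟨x, z.2, ?_⟩
    rw [hphimk]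
    refine Prod.ext ?_ ?_
    · show z.1 = qmk I x + 0
      rw [hx, add_zero]
    · show z.2 = 0 + z.2
      rw [zero_add]
  have hcompat : ∀ (x : g) (ξ : annIdeal I),
      dblPairing I (PhiMap I x) ((0 : g ⧸ I), ξ) = (ξ : Module.Dual ℝ g) x := by
    intro x ξ
    show evalQ I (0 : annIdeal I) (0 : g ⧸ I) + evalQ I ξ (qmk I x)
        = (ξ : Module.Dual ℝ g) x
    rw [evalQ_zero', evalQ_mk, zero_add]
  exact ⟨Bm, hadd1, hadd2, hsmul1, hsmul2, hskew, hjacobi, hinv, hnondeg,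
    bG, bA, hiso, hmax, hphi, hphiiso, hdecph, hcompat⟩
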